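/- With the fusion trace maps Tr(δ) = εδε + e_{12}δe_{21} on double derivations and Tr(ω) = εωε + e_{12}ωe_{21} on 2-forms (for A⁺ with matrix units e_{ij} and ε = 1 - e_2), one has ι_{Tr(δ)}(Tr(ω)) = Tr(ι_δ(ω)) for all ω ∈ Ω²_{R⁺}(A⁺) and δ ∈ D_{A⁺/R⁺}. -/
import Mathlib


open scoped TensorProduct

section

variable {k : Type*} [Field k] {A : Type*} [Ring A] [Algebra k A]
  {Ω : Type*} [Ring Ω] [Algebra k Ω]

/-- Sweedler-type evaluation: for `t = ∑ x ⊗ y` this returns `∑ ι(y) * w * ι(x)`. -/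
noncomputable def sweedler (ι : A →ₐ[k] Ω) (w : Ω) : A ⊗[k] A →ₗ[k] Ω :=
  TensorProduct.lift
    (LinearMap.mk₂ k (fun x y => ι y * w * ι x)
      (fun _ _ _ => by simp [map_add, mul_add])
      (fun _ _ _ => by simp [map_smul, mul_smul_comm])
      (fun _ _ _ => by simp [map_add, add_mul])
      (fun _ _ _ => by simp [map_smul, smul_mul_assoc]))

/-- `(a δ b)(c) = δ(c)' b ⊗ a δ(c)''`: the inner bimodule action on double derivations. -/
noncomputable def innerTwist (a b : A) (δ : A →ₗ[k] A ⊗[k] A) : A →ₗ[k] A ⊗[k] A :=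
  (TensorProduct.map (LinearMap.mulRight k b) (LinearMap.mulLeft k a)) ∘ₗ δ

/-- The contraction
`ι_δ(p dq dr s) = δ(q)''·dr·s·p·δ(q)' − δ(r)''·s·p·dq·δ(r)'`
of a double derivation `δ` against the noncommutative `2`-form `p dq dr s`. -/
noncomputable def contractForm2' (ι : A →ₐ[k] Ω) (d : A →ₗ[k] Ω)
    (δ : A →ₗ[k] A ⊗[k] A) (p q r s : A) : Ω :=
  sweedler ι (d r * ι s * ι p) (δ q) - sweedler ι (ι s * ι p * d q) (δ r)

lemma sweedler_tmul (ι : A →ₐ[k] Ω) (w : Ω) (x y : A) :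
    sweedler ι w (x ⊗ₜ[k] y) = ι y * w * ι x := rfl

lemma sweedler_w_add (ι : A →ₐ[k] Ω) (w₁ w₂ : Ω) (t : A ⊗[k] A) :
    sweedler ι (w₁ + w₂) t = sweedler ι w₁ t + sweedler ι w₂ t := by
  induction t using TensorProduct.induction_on with
  | zero => simp
  | tmul x y => simp [sweedler_tmul, mul_add, add_mul]
  | add a b ha hb => simp [map_add, ha, hb, add_add_add_comm]

@[simp] lemma sweedler_map (ι : A →ₐ[k] Ω) (w : Ω) (a b : A) (t : A ⊗[k] A) :
    sweedler ι w ((TensorProduct.map (LinearMap.mulRight k b) (LinearMap.mulLeft k a)) t) =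
      ι a * sweedler ι w t * ι b := by
  induction t using TensorProduct.induction_on with
  | zero => simp
  | tmul x y =>
    simp [sweedler_tmul, LinearMap.mulRight_apply, LinearMap.mulLeft_apply, map_mul, mul_assoc]
  | add a' b' ha hb => simp [map_add, ha, hb, mul_add, add_mul]

end

/-- In the fusion setting, with trace maps `Tr(δ) = εδε + e₁₂δe₂₁` on double derivations and
`Tr(ω) = εωε + e₁₂ωe₂₁` on `2`-forms (for `A⁺` with matrix units `e₁₂, e₂₁`, `ε = 1 - e₂`,
and the decomposition `1 = ε + e₂₁e₁₂`), one has `ι_{Tr(δ)}(Tr(ω)) = Tr(ι_δ(ω))` for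
`ω = p dq dr ∈ Ω²_{R⁺}(A⁺)` and `δ ∈ D_{A⁺/R⁺}`.  Here
`Tr(p dq dr) = (εp) dq dr ε + (e₁₂ p) dq dr e₂₁`, and forms are axiomatised by an embedding
`ι : A → Ω` and a Leibniz differential `d`. -/
theorem contraction_commutes_with_trace
    {k : Type*} [Field k] [CharZero k] {A : Type*} [Ring A] [Algebra k A]
    {Ω : Type*} [Ring Ω] [Algebra k Ω]
    (ι : A →ₐ[k] Ω) (d : A →ₗ[k] Ω)
    (hLeib : ∀ u v : A, d (u * v) = ι u * d v + d u * ι v)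
    (ε e12 e21 : A)
    (hε : ε * ε = ε) (h12 : ε * e12 = e12) (h21 : e21 * ε = e21)
    (hdec : (1 : A) = ε + e21 * e12)
    (δ : A →ₗ[k] A ⊗[k] A)
    (hδder : ∀ u v : A,
      δ (u * v) = TensorProduct.map (LinearMap.mulLeft k u) LinearMap.id (δ v) +
        TensorProduct.map LinearMap.id (LinearMap.mulRight k v) (δ u))
    (p q r : A) :
    contractForm2' ι d (innerTwist ε ε δ + innerTwist e12 e21 δ) (ε * p) q r ε +
      contractForm2' ι d (innerTwist ε ε δ + innerTwist e12 e21 δ) (e12 * p) q r e21 =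
    ι ε * contractForm2' ι d δ p q r 1 * ι ε +
      ι e12 * contractForm2' ι d δ p q r 1 * ι e21 := by
  have key : ∀ x : A, ε * (ε * x) + e21 * (e12 * x) = x := fun x => by
    rw [← mul_assoc, ← mul_assoc, hε, ← add_mul, ← hdec, one_mul]
  have hq : sweedler ι (d r * ι ε * ι (ε * p)) (δ q) +
      sweedler ι (d r * ι e21 * ι (e12 * p)) (δ q) = sweedler ι (d r * ι p) (δ q) := by
    rw [← sweedler_w_add]
    congr 1
    rw [mul_assoc, mul_assoc, ← mul_add, ← map_mul, ← map_mul, ← map_add, key]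
  have hr : sweedler ι (ι ε * ι (ε * p) * d q) (δ r) +
      sweedler ι (ι e21 * ι (e12 * p) * d q) (δ r) = sweedler ι (ι p * d q) (δ r) := by
    rw [← sweedler_w_add]
    congr 1
    rw [← map_mul, ← map_mul, ← add_mul, ← map_add, key]
  simp only [contractForm2', innerTwist, LinearMap.add_apply, LinearMap.coe_comp,
    Function.comp_apply, map_add, sweedler_map, map_one, mul_one, one_mul]
  rw [← hq, ← hr]
  noncomm_ring
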